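/- Let (D1, M) be a periodic first-derivative SBP operator with diagonal mass matrix (M symmetric positive definite and diagonal, M·D1 + D1ᵀ·M = 0) and D2 a periodic second-derivative SBP operator with the same mass matrix M (M·D2 = −A2, A2 symmetric positive semidefinite). Let u : ℝ → ℝ^m be differentiable and satisfy the split-form Camassa-Holm semidiscretization ∂ₜu = −(I − D2)⁻¹·(D1·(u∘u) + u∘(D1·u) − (1/2)·D1·(u∘(D2·u)) − (1/2)·D2·(u∘(D1·u))) for all t. Then the discrete invariant (1/2)·u(t)ᵀ·M·(I − D2)·u(t) is constant in t. -/

import Mathlib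

open Matrix

lemma diag_dot_assoc {m : ℕ} {M : Matrix (Fin m) (Fin m) ℝ} (h : M.IsDiag)
    (x y z : Fin m → ℝ) : (x * y) ⬝ᵥ M *ᵥ z = x ⬝ᵥ M *ᵥ (y * z) := by
  rw [← h.diagonal_diag]
  simp only [dotProduct, mulVec_diagonal, Pi.mul_apply]
  exact Finset.sum_congr rfl fun i _ => by ring

lemma diag_dot_swap {m : ℕ} {M : Matrix (Fin m) (Fin m) ℝ} (h : M.IsDiag)
    (x y z : Fin m → ℝ) : (x * y) ⬝ᵥ M *ᵥ z = (x * z) ⬝ᵥ M *ᵥ y := by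
  rw [← h.diagonal_diag]
  simp only [dotProduct, mulVec_diagonal, Pi.mul_apply]
  exact Finset.sum_congr rfl fun i _ => by ring

lemma dot_transpose {m : ℕ} (A : Matrix (Fin m) (Fin m) ℝ) (x y : Fin m → ℝ) :
    x ⬝ᵥ A *ᵥ y = (Aᵀ *ᵥ x) ⬝ᵥ y := by
  rw [dotProduct_mulVec, mulVec_transpose]

lemma skew_dot {m : ℕ} {K : Matrix (Fin m) (Fin m) ℝ} (h : Kᵀ = -K)
    (x y : Fin m → ℝ) : x ⬝ᵥ K *ᵥ y = -(y ⬝ᵥ K *ᵥ x) := by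
  rw [dot_transpose, h, neg_mulVec, neg_dotProduct, dotProduct_comm]

/-- The split-form Camassa-Holm semidiscretization
`∂ₜu = −(I − D2)⁻¹ (D1 (u∘u) + u∘(D1 u) − (1/2) D1 (u∘(D2 u)) − (1/2) D2 (u∘(D1 u)))`
with periodic SBP operators `D1`, `D2` sharing a diagonal symmetric positive
definite mass matrix `M` conserves the discrete invariant
`(1/2) uᵀ·M·(I − D2)·u`. -/
theorem camassa_holm_conserves_invariant
    (m : ℕ) (D1 D2 M A2 : Matrix (Fin m) (Fin m) ℝ)
    (hM : M.PosDef) (hMdiag : M.IsDiag)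
    (hD1 : M * D1 + D1ᵀ * M = 0)
    (hA2 : A2.PosSemidef)
    (hD2 : M * D2 = -A2)
    (u : ℝ → Fin m → ℝ)
    (hu : ∀ t, HasDerivAt u
      (-((1 - D2)⁻¹ *ᵥ (D1 *ᵥ (u t * u t) + u t * (D1 *ᵥ u t)
        - (1 / 2 : ℝ) • (D1 *ᵥ (u t * (D2 *ᵥ u t)))
        - (1 / 2 : ℝ) • (D2 *ᵥ (u t * (D1 *ᵥ u t)))))) t) :
    ∀ t₁ t₂ : ℝ,
      (1 / 2 : ℝ) * (u t₁ ⬝ᵥ ((M * (1 - D2)) *ᵥ u t₁))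
        = (1 / 2 : ℝ) * (u t₂ ⬝ᵥ ((M * (1 - D2)) *ᵥ u t₂)) := by
  set B : Matrix (Fin m) (Fin m) ℝ := M * (1 - D2) with hBdef
  have hB : B = M + A2 := by
    rw [hBdef, Matrix.mul_sub, Matrix.mul_one, hD2, sub_neg_eq_add]
  have hBpos : B.PosDef := hB ▸ hM.add_posSemidef hA2
  have hMherm : Mᵀ = M := hM.isHermitian
  have hA2herm : A2ᵀ = A2 := hA2.isHermitian
  have hBsym : Bᵀ = B := by rw [hB, transpose_add, hMherm, hA2herm]
  have hBdet : IsUnit B.det := (Matrix.isUnit_iff_isUnit_det B).mp hBpos.isUnit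
  have hIdet : IsUnit (1 - D2).det := by
    have hdm : B.det = M.det * (1 - D2).det := by rw [hBdef, det_mul]
    rw [hdm] at hBdet
    exact isUnit_of_mul_isUnit_right hBdet
  have hinv : (1 - D2) * (1 - D2)⁻¹ = 1 := mul_nonsing_inv _ hIdet
  have hBinv : B * (1 - D2)⁻¹ = M := by
    rw [hBdef, Matrix.mul_assoc, hinv, Matrix.mul_one]
  have hKskew : (M * D1)ᵀ = -(M * D1) := by
    rw [transpose_mul, hMherm]
    exact eq_neg_of_add_eq_zero_right hD1
  have hSsym : (M * D2)ᵀ = M * D2 := by rw [hD2, transpose_neg, hA2herm]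
  -- right-hand-side vector
  set r : ℝ → Fin m → ℝ := fun t =>
    D1 *ᵥ (u t * u t) + u t * (D1 *ᵥ u t)
      - (1 / 2 : ℝ) • (D1 *ᵥ (u t * (D2 *ᵥ u t)))
      - (1 / 2 : ℝ) • (D2 *ᵥ (u t * (D1 *ᵥ u t))) with hrdef
  have hu' : ∀ t, HasDerivAt u (-((1 - D2)⁻¹ *ᵥ r t)) t := hu
  -- orthogonality: uᵀ M r = 0
  have hortho : ∀ t, u t ⬝ᵥ M *ᵥ r t = 0 := by
    intro t
    have t4eq : u t ⬝ᵥ M *ᵥ (D2 *ᵥ (u t * (D1 *ᵥ u t)))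
        = (u t * (D1 *ᵥ u t)) ⬝ᵥ M *ᵥ (D2 *ᵥ u t) := by
      rw [mulVec_mulVec, dot_transpose, hSsym, dotProduct_comm, ← mulVec_mulVec]
    have t12 : u t ⬝ᵥ M *ᵥ (D1 *ᵥ (u t * u t))
        = -(u t ⬝ᵥ M *ᵥ (u t * (D1 *ᵥ u t))) := by
      rw [mulVec_mulVec, skew_dot hKskew, ← mulVec_mulVec,
        diag_dot_assoc hMdiag]
    have t3eq : u t ⬝ᵥ M *ᵥ (D1 *ᵥ (u t * (D2 *ᵥ u t)))
        = -(u t ⬝ᵥ M *ᵥ (D2 *ᵥ (u t * (D1 *ᵥ u t)))) := by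
      rw [mulVec_mulVec, skew_dot hKskew, ← mulVec_mulVec,
        diag_dot_swap hMdiag, t4eq]
    have expand : u t ⬝ᵥ M *ᵥ r t
        = u t ⬝ᵥ M *ᵥ (D1 *ᵥ (u t * u t))
          + u t ⬝ᵥ M *ᵥ (u t * (D1 *ᵥ u t))
          - (1 / 2 : ℝ) * (u t ⬝ᵥ M *ᵥ (D1 *ᵥ (u t * (D2 *ᵥ u t))))
          - (1 / 2 : ℝ) * (u t ⬝ᵥ M *ᵥ (D2 *ᵥ (u t * (D1 *ᵥ u t)))) := by
      simp only [hrdef, mulVec_add, mulVec_sub, mulVec_smul, dotProduct_add,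
        dotProduct_sub, dotProduct_smul, smul_eq_mul]
    rw [expand, t12, t3eq]; ring
  -- the invariant has zero derivative
  have hderiv : ∀ t, HasDerivAt (fun s => (1 / 2 : ℝ) * (u s ⬝ᵥ B *ᵥ u s)) 0 t := by
    intro t
    set w : Fin m → ℝ := -((1 - D2)⁻¹ *ᵥ r t) with hwdef
    have hw : ∀ i, HasDerivAt (fun s => u s i) (w i) t :=
      fun i => hasDerivAt_pi.mp (hu' t) i
    have hBu : ∀ i, HasDerivAt (fun s => (B *ᵥ u s) i) ((B *ᵥ w) i) t := by
      intro i
      simp only [mulVec, dotProduct]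
      exact HasDerivAt.fun_sum fun j _ => (hw j).const_mul (B i j)
    have hsum : HasDerivAt (fun s => ∑ i, u s i * (B *ᵥ u s) i)
        (∑ i, (w i * (B *ᵥ u t) i + u t i * (B *ᵥ w) i)) t :=
      HasDerivAt.fun_sum fun i _ => (hw i).mul (hBu i)
    have hBw : B *ᵥ w = -(M *ᵥ r t) := by
      rw [hwdef, mulVec_neg, mulVec_mulVec, hBinv]
    have h2 : w ⬝ᵥ B *ᵥ u t = u t ⬝ᵥ B *ᵥ w := by
      rw [dot_transpose, hBsym, dotProduct_comm]
    have h3 : u t ⬝ᵥ B *ᵥ w = 0 := by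
      rw [hBw, dotProduct_neg, hortho t, neg_zero]
    have hval : ∑ i, (w i * (B *ᵥ u t) i + u t i * (B *ᵥ w) i) = 0 := by
      have h1 : ∑ i, (w i * (B *ᵥ u t) i + u t i * (B *ᵥ w) i)
          = w ⬝ᵥ B *ᵥ u t + u t ⬝ᵥ B *ᵥ w := by
        simp [dotProduct, Finset.sum_add_distrib]
      rw [h1, h2, h3]; ring
    have hfin := hsum.const_mul (1 / 2 : ℝ)
    rw [hval, mul_zero] at hfin
    exact hfin
  intro t₁ t₂
  exact is_const_of_deriv_eq_zero
    (fun t => (hderiv t).differentiableAt)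
    (fun t => (hderiv t).deriv) t₁ t₂
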